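/- Under the map α = u + x*(a*ζ) + y*(a*ζ^2 + b*ζ) ↦ N (the 3x3 matrix with rows (u, -a*d*y, -a*d*x - b*d*y), (x, u - b*x - c*y, -c*x - d*y), (y, a*x, u - c*y)), the field norm N_{K/ℚ}(α) equals det(N). -/

import Mathlib

open IntermediateField in
/-- In a cubic field `K = ℚ(ζ)` with `ζ` a root of `aX³ + bX² + cX + d`,
the norm of `α = u + x·(aζ) + y·(aζ² + bζ)` equals `det N(u,x,y)`. -/
theorem norm_eq_det_cubic_field {K : Type*} [Field K] [Algebra ℚ K]
    [FiniteDimensional ℚ K] (hdim : Module.finrank ℚ K = 3)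
    (a b c d : ℚ) (ha : a ≠ 0) (ζ : K)
    (hζ : algebraMap ℚ K a * ζ ^ 3 + algebraMap ℚ K b * ζ ^ 2 +
      algebraMap ℚ K c * ζ + algebraMap ℚ K d = 0)
    (hgen : ∀ q : ℚ, ζ ≠ algebraMap ℚ K q)
    (u x y : ℚ) :
    Algebra.norm ℚ
        (algebraMap ℚ K u + algebraMap ℚ K x * (algebraMap ℚ K a * ζ) +
          algebraMap ℚ K y * (algebraMap ℚ K a * ζ ^ 2 + algebraMap ℚ K b * ζ)) =
      (!![u, -a * d * y, -a * d * x - b * d * y;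
          x, u - b * x - c * y, -c * x - d * y;
          y, a * x, u - c * y] : Matrix (Fin 3) (Fin 3) ℚ).det := by
  haveI : CharZero K := charZero_of_injective_algebraMap (algebraMap ℚ K).injective
  have hint : IsIntegral ℚ ζ := Algebra.IsIntegral.isIntegral ζ
  have hdvd : Module.finrank ℚ ℚ⟮ζ⟯ ∣ 3 := by
    refine ⟨Module.finrank ℚ⟮ζ⟯ K, ?_⟩
    rw [← hdim, ← Module.finrank_mul_finrank ℚ ℚ⟮ζ⟯ K]
  have hdeg : (minpoly ℚ ζ).natDegree = 3 := by
    rw [← IntermediateField.adjoin.finrank hint]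
    rcases (Nat.prime_three).eq_one_or_self_of_dvd _ hdvd with h | h
    · exfalso
      have hb : ζ ∈ (⊥ : IntermediateField ℚ K) :=
        IntermediateField.adjoin_simple_eq_bot_iff.mp
          (IntermediateField.finrank_eq_one_iff.mp h)
      rw [IntermediateField.mem_bot] at hb
      obtain ⟨q, hq⟩ := hb
      exact hgen q hq.symm
    · exact h
  have hpows : ∀ g : Fin 3 → ℚ, (∑ i, g i • ζ ^ (i : ℕ)) = 0 → ∀ i, g i = 0 := by
    have := linearIndependent_pow (K := ℚ) ζ
    rw [hdeg] at this
    exact Fintype.linearIndependent_iff.mp this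
  set f := algebraMap ℚ K with hf
  set v : Fin 3 → K := ![(1 : K), f a * ζ, f a * ζ ^ 2 + f b * ζ] with hv
  have li : LinearIndependent ℚ v := by
    refine Fintype.linearIndependent_iff.mpr fun g hg => ?_
    have h0 : (∑ i, ![g 0, a * g 1 + b * g 2, a * g 2] i • ζ ^ (i : ℕ)) = 0 := by
      rw [← hg]
      simp only [hv, Fin.sum_univ_three, Matrix.cons_val_zero, Matrix.cons_val_one,
        Matrix.head_cons, Matrix.cons_val_two, Matrix.tail_cons, Algebra.smul_def,
        map_add, map_mul, Fin.val_zero, Fin.val_one, Fin.val_two, pow_zero, pow_one]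
      ring
    have hall := hpows _ h0
    have h2 : g 2 = 0 := by
      have := hall 2
      simp only [Matrix.cons_val_two, Matrix.tail_cons, Matrix.head_cons] at this
      rcases mul_eq_zero.mp this with h | h
      · exact absurd h ha
      · exact h
    have h1 : g 1 = 0 := by
      have := hall 1
      simp only [Matrix.cons_val_one, Matrix.head_cons, h2, mul_zero, add_zero] at this
      rcases mul_eq_zero.mp this with h | h
      · exact absurd h ha
      · exact h
    have h0' : g 0 = 0 := by simpa using hall 0
    intro i; fin_cases i <;> assumption
  have hcard : Fintype.card (Fin 3) = Module.finrank ℚ K := by simp [hdim]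
  set B := basisOfLinearIndependentOfCardEqFinrank li hcard with hBdef
  have hB : ⇑B = v := coe_basisOfLinearIndependentOfCardEqFinrank li hcard
  set α : K := f u + f x * (f a * ζ) + f y * (f a * ζ ^ 2 + f b * ζ) with hα
  set N : Matrix (Fin 3) (Fin 3) ℚ :=
    !![u, -a * d * y, -a * d * x - b * d * y;
       x, u - b * x - c * y, -c * x - d * y;
       y, a * x, u - c * y] with hN
  have hζ' : (a : K) * ζ ^ 3 + (b : K) * ζ ^ 2 + (c : K) * ζ + (d : K) = 0 := by
    simpa only [eq_ratCast] using hζ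
  have key0 : α * B 0 = ∑ k, N k 0 • B k := by
    simp [hα, hB, hN, hv, hf, Fin.sum_univ_three, Algebra.smul_def, eq_ratCast]
  have key1 : α * B 1 = ∑ k, N k 1 • B k := by
    simp [hα, hB, hN, hv, hf, Fin.sum_univ_three, Algebra.smul_def, eq_ratCast]
    linear_combination ((y : K) * (a : K)) * hζ'
  have key2 : α * B 2 = ∑ k, N k 2 • B k := by
    simp [hα, hB, hN, hv, hf, Fin.sum_univ_three, Algebra.smul_def, eq_ratCast]
    linear_combination ((x : K) * (a : K) + (y : K) * ((a : K) * ζ + (b : K))) * hζ'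
  have key : ∀ j, α * B j = ∑ k, N k j • B k := by
    intro j; fin_cases j
    exacts [key0, key1, key2]
  rw [Algebra.norm_eq_matrix_det B, show Algebra.leftMulMatrix B α = N from ?_]
  · ext i j
    rw [Algebra.leftMulMatrix_eq_repr_mul, key j, Module.Basis.repr_sum_self]
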